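/- The presented group with generators x₁, x₂, x₃, x₄ and defining relations x₂ = x₃, x₁ = x₃⁻¹x₄x₃, (x₁x₂)⁴ = (x₂x₁)⁴, x₃ = x₂x₁x₂x₁x₂x₁⁻¹x₂⁻¹x₁⁻¹x₂⁻¹, x₃⁻¹x₄x₃ = x₂x₁x₂x₁x₂⁻¹x₁⁻¹x₂⁻¹, and x₄x₃x₂x₁ = e is isomorphic to the presented group ⟨a₁, a₂ | (a₁a₂)² = e⟩. -/

import Mathlib

/-- Generators: `x₁, x₂, x₃, x₄` are `x 0, x 1, x 2, x 3`. -/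
private def x : Fin 4 → FreeGroup (Fin 4) := FreeGroup.of

/-- The relators of the presentation of `π₁` of the complement of the arrangement `𝒞₂`:
`x₂ = x₃`, `x₁ = x₃⁻¹x₄x₃`, `(x₁x₂)⁴ = (x₂x₁)⁴`, `x₃ = x₂x₁x₂x₁x₂x₁⁻¹x₂⁻¹x₁⁻¹x₂⁻¹`,
`x₃⁻¹x₄x₃ = x₂x₁x₂x₁x₂⁻¹x₁⁻¹x₂⁻¹`, `x₄x₃x₂x₁ = e`. -/
def relsC2vk : Set (FreeGroup (Fin 4)) :=
  { x 1 * (x 2)⁻¹,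
    x 0 * ((x 2)⁻¹ * x 3 * x 2)⁻¹,
    (x 0 * x 1) ^ 4 * ((x 1 * x 0) ^ 4)⁻¹,
    x 2 * (x 1 * x 0 * x 1 * x 0 * x 1 * (x 0)⁻¹ * (x 1)⁻¹ * (x 0)⁻¹ * (x 1)⁻¹)⁻¹,
    (x 2)⁻¹ * x 3 * x 2 * (x 1 * x 0 * x 1 * x 0 * (x 1)⁻¹ * (x 0)⁻¹ * (x 1)⁻¹)⁻¹,
    x 3 * x 2 * x 1 * x 0 }

/-- The target presentation `⟨a₁, a₂ | (a₁a₂)² = e⟩`. -/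
def relA2 : Set (FreeGroup (Fin 2)) :=
  {(FreeGroup.of 0 * FreeGroup.of 1) ^ 2}

namespace C2proof

lemma mk_rel_one {α : Type*} {rels : Set (FreeGroup α)} {r : FreeGroup α} (hr : r ∈ rels) :
    (PresentedGroup.mk rels r) = 1 :=
  (QuotientGroup.eq_one_iff _).mpr (Subgroup.subset_normalClosure hr)

abbrev P := PresentedGroup relsC2vk
abbrev Q := PresentedGroup relA2

noncomputable def p : Q := PresentedGroup.of 0
noncomputable def q : Q := PresentedGroup.of 1

lemma hpq : p * q * (p * q) = 1 := by
  have := mk_rel_one (rels := relA2) (r := (FreeGroup.of 0 * FreeGroup.of 1) ^ 2) rfl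
  simpa [p, q, pow_two, PresentedGroup.of, map_mul, mul_assoc] using this

noncomputable def f : Fin 4 → Q := ![q, p, p, q⁻¹ * p⁻¹ * p⁻¹]

lemma hqp : q * p * (q * p) = 1 := by
  have h := hpq
  have : q * p * (q * p) = q * (p * q * (p * q)) * q⁻¹ := by group
  rw [this, h]; group

lemma hf : ∀ r ∈ relsC2vk, FreeGroup.lift f r = 1 := by
  have h := hpq
  have h' := hqp
  intro r hr
  rcases hr with hr | hr | hr | hr | hr | hr <;> subst hr <;>
    simp only [x, map_mul, map_inv, map_pow, FreeGroup.lift_apply_of, f,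
      Matrix.cons_val_zero, Matrix.cons_val_one, Matrix.head_cons,
      Matrix.cons_val_two, Matrix.tail_cons, Matrix.cons_val_three, Matrix.head_fin_const]
  · group
  · calc q * ((p)⁻¹ * (q⁻¹ * p⁻¹ * p⁻¹) * p)⁻¹ = q * p * (q * p) := by group
    _ = 1 := h'
  · have e1 : (q * p) ^ 4 = 1 := by
      rw [show (4:ℕ) = 2*2 from rfl, pow_mul, pow_two, pow_two, h', one_mul]
    have e2 : (p * q) ^ 4 = 1 := by
      rw [show (4:ℕ) = 2*2 from rfl, pow_mul, pow_two, pow_two, h, one_mul]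
    rw [e1, e2]; group
  · calc p * (p * q * p * q * p * q⁻¹ * p⁻¹ * q⁻¹ * p⁻¹)⁻¹
        = p * ((p * q * (p * q)) * p * (p * q * (p * q))⁻¹)⁻¹ := by group
    _ = 1 := by rw [h]; group
  · calc p⁻¹ * (q⁻¹ * p⁻¹ * p⁻¹) * p * (p * q * p * q * p⁻¹ * q⁻¹ * p⁻¹)⁻¹
        = (p * q * (p * q))⁻¹ := by group
    _ = 1 := by rw [h]; group
  · group

noncomputable def X : Fin 4 → P := PresentedGroup.of

lemma hX1 : X 1 = X 2 := by
  have h0 := mk_rel_one (rels := relsC2vk) (r := x 1 * (x 2)⁻¹) (by left; rfl)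
  have h : X 1 * (X 2)⁻¹ = 1 := by simpa [x, map_mul, map_inv, X, PresentedGroup.of] using h0
  exact mul_inv_eq_one.mp h

lemma hX6 : X 3 * X 2 * X 1 * X 0 = 1 := by
  have := mk_rel_one (rels := relsC2vk) (r := x 3 * x 2 * x 1 * x 0)
    (by right; right; right; right; right; rfl)
  simpa [x, map_mul, X, PresentedGroup.of] using this

lemma hX3 : X 3 = X 2 * X 0 * (X 2)⁻¹ := by
  have h0 := mk_rel_one (rels := relsC2vk) (r := x 0 * ((x 2)⁻¹ * x 3 * x 2)⁻¹)
    (by right; left; rfl)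
  have h2 : X 0 * ((X 2)⁻¹ * X 3 * X 2)⁻¹ = 1 := by
    simpa [x, map_mul, map_inv, X, PresentedGroup.of] using h0
  have h0' : X 0 = (X 2)⁻¹ * X 3 * X 2 := mul_inv_eq_one.mp h2
  rw [h0']; group

lemma hCA : (X 2 * X 0) * (X 2 * X 0) = 1 := by
  calc (X 2 * X 0) * (X 2 * X 0) = (X 2 * X 0 * (X 2)⁻¹) * X 2 * X 2 * X 0 := by group
  _ = X 3 * X 2 * X 1 * X 0 := by rw [hX3, hX1]
  _ = 1 := hX6

lemma hX3' : X 3 = (X 0)⁻¹ * (X 2)⁻¹ * (X 2)⁻¹ := by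
  have h : X 2 * X 0 = (X 0)⁻¹ * (X 2)⁻¹ := by
    rw [← mul_inv_rev]; exact mul_eq_one_iff_eq_inv.mp hCA
  rw [hX3, h]

noncomputable def g : Fin 2 → P := ![X 2, X 0]

lemma hg : ∀ r ∈ relA2, FreeGroup.lift g r = 1 := by
  intro r hr
  simp only [relA2, Set.mem_singleton_iff] at hr
  subst hr
  simp only [map_mul, map_pow, FreeGroup.lift_apply_of, g, Matrix.cons_val_zero,
    Matrix.cons_val_one, Matrix.head_cons]
  rw [pow_two]
  exact hCA

noncomputable def φ : P →* Q := PresentedGroup.toGroup hf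
noncomputable def ψ : Q →* P := PresentedGroup.toGroup hg

lemma comp1 : ψ.comp φ = MonoidHom.id P := by
  apply PresentedGroup.ext
  intro i
  fin_cases i <;>
    simp only [MonoidHom.comp_apply, MonoidHom.id_apply, φ, ψ, PresentedGroup.toGroup.of,
      f, g, Matrix.cons_val_zero, Matrix.cons_val_one, Matrix.head_cons,
      Matrix.cons_val_two, Matrix.tail_cons, Matrix.cons_val_three, Matrix.head_fin_const,
      p, q, map_mul, map_inv]
  · rfl
  · exact hX1.symm
  · rfl
  · exact hX3'.symm

lemma comp2 : φ.comp ψ = MonoidHom.id Q := by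
  apply PresentedGroup.ext
  intro i
  fin_cases i <;>
    simp only [MonoidHom.comp_apply, MonoidHom.id_apply, φ, ψ, PresentedGroup.toGroup.of,
      f, g, Matrix.cons_val_zero, Matrix.cons_val_one, Matrix.head_cons,
      Matrix.cons_val_two, Matrix.tail_cons, X] <;> rfl

end C2proof

theorem presentation_C2 :
    Nonempty (PresentedGroup relsC2vk ≃* PresentedGroup relA2) :=
  ⟨C2proof.φ.toMulEquiv C2proof.ψ C2proof.comp1 C2proof.comp2⟩
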